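/- Let G be an undirected, locally finite, bipartite simple graph, let v be a vertex of G, and let w be a real-valued weight function on the edges of G. For each n ∈ ℕ let a(n) be the sum, over all closed walks of length 2n in G starting and ending at v, of the product of the edge weights traversed (with multiplicity; the empty walk has weight 1). Then the sequence (a(n))_{n∈ℕ} is path-enumerable. -/

import Mathlib

/-- The set of closed walks of length `2n` in the path graph on `ℕ`
(vertices `m`, `m'` adjacent iff `|m - m'| = 1`) starting and ending at vertex `0`,
encoded as sequences of `2n + 1` vertices. -/
def closedWalks0 (n : ℕ) : Set (Fin (2 * n + 1) → ℕ) :=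
  {f | f 0 = 0 ∧ f (Fin.last (2 * n)) = 0 ∧
    ∀ i : Fin (2 * n), f i.succ = f i.castSucc + 1 ∨ f i.castSucc = f i.succ + 1}

/-- The weight of a walk in the path graph on `ℕ`, where the edge `{m, m+1}` has
weight `w (m+1)`: the product of the edge weights traversed, with multiplicity. -/
def walkWeight (w : ℕ → ℝ) (n : ℕ) (f : Fin (2 * n + 1) → ℕ) : ℝ :=
  ∏ i : Fin (2 * n), w (max (f i.castSucc) (f i.succ))

/-- `a` is path-enumerable: `a 0 ≥ 0` and there are edge weights `w` on the path
graph on `ℕ` such that `a n` is `a 0` times the weighted sum over all closed walks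
of length `2n` starting at `0`. -/
def IsPathEnum (a : ℕ → ℝ) : Prop :=
  0 ≤ a 0 ∧ ∃ w : ℕ → ℝ, ∀ n : ℕ, a n = a 0 * ∑ᶠ f ∈ closedWalks0 n, walkWeight w n f


open Finsupp
open scoped Classical

noncomputable section Generic

variable {V : Type} (G : SimpleGraph V) [inst : ∀ x, Fintype (G.neighborSet x)]
  (w : V → V → ℝ)

/-- row of the weighted adjacency matrix -/
def rowW (x : V) : V →₀ ℝ := ∑ y ∈ G.neighborFinset x, Finsupp.single y (w x y)

lemma rowW_apply (x u : V) : rowW G w x u = if G.Adj x u then w x u else 0 := by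
  rw [rowW, Finsupp.finset_sum_apply]
  simp_rw [Finsupp.single_apply]
  rw [Finset.sum_ite_eq' (G.neighborFinset x) u (fun y => w x y)]
  simp [SimpleGraph.mem_neighborFinset]

/-- the weighted adjacency operator on finitely supported functions -/
def Aop : (V →₀ ℝ) →ₗ[ℝ] (V →₀ ℝ) :=
  Finsupp.lsum ℝ fun x => LinearMap.toSpanSingleton ℝ (V →₀ ℝ) (rowW G w x)

lemma Aop_apply (h : V →₀ ℝ) : Aop G w h = h.sum fun x a => a • rowW G w x := by
  rfl

lemma Aop_single (x : V) (c : ℝ) : Aop G w (Finsupp.single x c) = c • rowW G w x := by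
  rw [Aop_apply, Finsupp.sum_single_index]; simp

lemma Aop_eval (h : V →₀ ℝ) (u : V) :
    Aop G w h u = ∑ x ∈ G.neighborFinset u, h x * w x u := by
  rw [Aop_apply, Finsupp.sum_apply, Finsupp.sum]
  simp_rw [Finsupp.smul_apply, smul_eq_mul, rowW_apply]
  have : ∀ x ∈ h.support, (h x * if G.Adj x u then w x u else 0)
      = if x ∈ G.neighborFinset u then h x * w x u else 0 := by
    intro x _
    by_cases hxu : G.Adj x u
    · simp [hxu, SimpleGraph.mem_neighborFinset, hxu.symm]
    · have h2 : ¬ G.Adj u x := fun hc => hxu hc.symm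
      simp [hxu, SimpleGraph.mem_neighborFinset, h2]
  rw [Finset.sum_congr rfl this, Finset.sum_ite_mem]
  apply Finset.sum_subset Finset.inter_subset_right
  intro x hxn hx
  have : h x = 0 := by
    by_contra hc
    exact hx (Finset.mem_inter.2 ⟨Finsupp.mem_support_iff.2 hc, hxn⟩)
  rw [this, zero_mul]

/-- inner product as a bilinear map -/
def Bip : (V →₀ ℝ) →ₗ[ℝ] (V →₀ ℝ) →ₗ[ℝ] ℝ :=
  Finsupp.lsum ℝ fun x => LinearMap.toSpanSingleton ℝ ((V →₀ ℝ) →ₗ[ℝ] ℝ)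
    (Finsupp.lapply x)

lemma Bip_apply (f g : V →₀ ℝ) : Bip f g = ∑ x ∈ f.support, f x * g x := by
  show (f.sum fun x a => a • Finsupp.lapply x) g = _
  rw [Finsupp.sum, LinearMap.sum_apply]
  simp [Finsupp.lapply]

lemma Bip_eq_sum (f g : V →₀ ℝ) (s : Finset V) (hs : f.support ⊆ s) :
    Bip f g = ∑ x ∈ s, f x * g x := by
  rw [Bip_apply]
  apply Finset.sum_subset hs
  intro x _ hx
  rw [Finsupp.notMem_support_iff.1 hx, zero_mul]

lemma Bip_comm (f g : V →₀ ℝ) : Bip f g = Bip g f := by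
  rw [Bip_eq_sum f g (f.support ∪ g.support) Finset.subset_union_left,
    Bip_eq_sum g f (f.support ∪ g.support) Finset.subset_union_right]
  exact Finset.sum_congr rfl fun x _ => mul_comm _ _

lemma Bip_single_right (f : V →₀ ℝ) (u : V) (c : ℝ) :
    Bip f (Finsupp.single u c) = f u * c := by
  rw [Bip_eq_sum f _ (f.support ∪ {u}) Finset.subset_union_left]
  simp_rw [Finsupp.single_apply]
  have : ∀ x ∈ f.support ∪ {u}, (f x * if u = x then c else 0)
      = if x = u then f x * c else 0 := by
    intro x _
    by_cases hx : x = u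
    · simp [hx]
    · rw [if_neg (fun h => hx h.symm), mul_zero, if_neg hx]
  rw [Finset.sum_congr rfl this, Finset.sum_ite_eq']
  simp

lemma Bip_single_left (u : V) (c : ℝ) (g : V →₀ ℝ) :
    Bip (Finsupp.single u c) g = c * g u := by
  rw [Bip_comm, Bip_single_right, mul_comm]

lemma Bip_nonneg (f : V →₀ ℝ) : 0 ≤ Bip f f := by
  rw [Bip_apply]
  exact Finset.sum_nonneg fun x _ => mul_self_nonneg _

lemma Bip_pos (f : V →₀ ℝ) (hf : f ≠ 0) : 0 < Bip f f := by
  rcases lt_or_eq_of_le (Bip_nonneg f) with h | h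
  · exact h
  · exfalso; apply hf
    ext x
    by_contra hx
    simp only [Finsupp.coe_zero, Pi.zero_apply] at hx
    have hmem : x ∈ f.support := Finsupp.mem_support_iff.2 hx
    have hz : f x * f x = 0 :=
      Finset.sum_eq_zero_iff_of_nonneg
        (fun y (_ : y ∈ f.support) => mul_self_nonneg (f y)) |>.1 (by rw [← Bip_apply, ← h]) x hmem
    exact hx (mul_self_eq_zero.mp hz)

lemma rowW_symm (hw : ∀ u u', w u u' = w u' u) (x y : V) :
    rowW G w x y = rowW G w y x := by
  rw [rowW_apply, rowW_apply, hw]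
  by_cases h : G.Adj x y
  · rw [if_pos h, if_pos h.symm]
  · rw [if_neg h, if_neg (fun hc => h hc.symm)]

lemma Aop_symm (hw : ∀ u u', w u u' = w u' u) (f g : V →₀ ℝ) :
    Bip (Aop G w f) g = Bip f (Aop G w g) := by
  have key : (Bip ∘ₗ (Aop G w) : (V →₀ ℝ) →ₗ[ℝ] (V →₀ ℝ) →ₗ[ℝ] ℝ)
      = Bip.compl₂ (Aop G w) := by
    apply Finsupp.lhom_ext
    intro x b
    apply Finsupp.lhom_ext
    intro y c
    simp only [LinearMap.comp_apply, LinearMap.compl₂_apply]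
    rw [Aop_single, Aop_single, map_smul, LinearMap.smul_apply, map_smul,
      Bip_single_left, Bip_single_right, smul_eq_mul, smul_eq_mul,
      rowW_symm G w hw x y]
    ring
  have := congrFun (congrArg (fun L => (L : _ → _)) (congrArg (fun L => L f) key)) g
  simpa using this


/-- set of walks of length m from v to u -/
def WS (v : V) (m : ℕ) (u : V) : Set (Fin (m+1) → V) :=
  {f | f 0 = v ∧ f (Fin.last m) = u ∧ ∀ i : Fin m, G.Adj (f i.castSucc) (f i.succ)}

def wtW (m : ℕ) (f : Fin (m+1) → V) : ℝ := ∏ i : Fin m, w (f i.castSucc) (f i.succ)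

lemma snoc_zero' (g : Fin (m+1) → V) (u : V) : (Fin.snoc g u : Fin (m+2) → V) 0 = g 0 := by
  have h0 : (0 : Fin (m+2)) = Fin.castSucc 0 := by simp
  rw [h0, Fin.snoc_castSucc]

lemma wt_snoc (g : Fin (m+1) → V) (u : V) :
    wtW w (m+1) (Fin.snoc g u) = wtW w m g * w (g (Fin.last m)) u := by
  rw [wtW, wtW, Fin.prod_univ_castSucc]
  congr 1
  · apply Finset.prod_congr rfl
    intro i _
    rw [Fin.succ_castSucc, Fin.snoc_castSucc, Fin.snoc_castSucc]
  · rw [Fin.succ_last, Fin.snoc_last, Fin.snoc_castSucc]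

lemma snoc_mem_WS {g : Fin (m+1) → V} {x u : V} (hg : g ∈ WS G v m x) (hadj : G.Adj x u) :
    (Fin.snoc g u : Fin (m+2) → V) ∈ WS G v (m+1) u := by
  obtain ⟨h0, hlast, hadjs⟩ := hg
  refine ⟨by rw [snoc_zero']; exact h0, by rw [Fin.snoc_last], ?_⟩
  intro i
  refine Fin.lastCases ?_ ?_ i
  · rw [Fin.succ_last, Fin.snoc_last, Fin.snoc_castSucc, hlast]
    exact hadj
  · intro j
    rw [Fin.succ_castSucc, Fin.snoc_castSucc, Fin.snoc_castSucc]
    exact hadjs j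

lemma WS_eq_snoc {f : Fin (m+2) → V} {u : V} (hf : f ∈ WS G v (m+1) u) :
    f = Fin.snoc (fun j => f j.castSucc) u := by
  obtain ⟨h0, hlast, hadjs⟩ := hf
  funext j
  refine Fin.lastCases ?_ ?_ j
  · rw [Fin.snoc_last, hlast]
  · intro j'
    rw [Fin.snoc_castSucc]

lemma walk_sum (v : V) (m : ℕ) :
    ∀ u, (WS G v m u).Finite ∧
    ∑ᶠ f ∈ WS G v m u, wtW w m f = (((Aop G w)^m) (Finsupp.single v 1)) u := by
  induction m with
  | zero =>
    intro u
    have hrhs : (((Aop G w)^0) (Finsupp.single v 1)) u = if u = v then 1 else 0 := by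
      rw [pow_zero, Module.End.one_apply, Finsupp.single_apply]
      by_cases h : u = v
      · rw [if_pos h, if_pos h.symm]
      · rw [if_neg h, if_neg (fun hc => h hc.symm)]
    by_cases huv : u = v
    · have hset : WS G v 0 u = {fun _ => v} := by
        ext f
        constructor
        · rintro ⟨h0, _, _⟩
          funext i
          have : i = 0 := Fin.fin_one_eq_zero i
          rw [this, h0]
        · rintro rfl
          exact ⟨rfl, huv.symm, fun i => i.elim0⟩
      rw [hset, hrhs, if_pos huv]
      refine ⟨Set.finite_singleton _, ?_⟩
      rw [finsum_mem_singleton]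
      simp [wtW]
    · have hset : WS G v 0 u = ∅ := by
        ext f
        simp only [WS, Set.mem_setOf_eq, Set.mem_empty_iff_false, iff_false]
        rintro ⟨h0, hlast, _⟩
        exact huv (by rw [← hlast, ← h0]; rfl)
      rw [hset, hrhs, if_neg huv]
      exact ⟨Set.finite_empty, by rw [finsum_mem_empty]⟩
  | succ m IH =>
    intro u
    set T : V → Finset (Fin (m+1) → V) := fun x => ((IH x).1).toFinset with hT
    have hTmem : ∀ x g, g ∈ T x ↔ g ∈ WS G v m x := fun x g => Set.Finite.mem_toFinset _
    set Fs : Finset (Fin (m+2) → V) :=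
      (G.neighborFinset u).biUnion (fun x => (T x).image (fun g => (Fin.snoc g u : Fin (m+2) → V))) with hFs
    have hset : WS G v (m+1) u = ↑Fs := by
      ext f
      simp only [hFs, Finset.coe_biUnion, Set.mem_iUnion, Finset.mem_coe,
        Finset.mem_image, SimpleGraph.mem_neighborFinset]
      constructor
      · intro hf
        obtain ⟨h0, hlast, hadjs⟩ := id hf
        set g : Fin (m+1) → V := fun j => f j.castSucc with hg
        have hadj : G.Adj (g (Fin.last m)) u := by
          have := hadjs (Fin.last m)
          rwa [Fin.succ_last, hlast] at this
        refine ⟨g (Fin.last m), hadj.symm, g, ?_, (WS_eq_snoc G hf).symm⟩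
        rw [hTmem]
        refine ⟨by rw [hg]; simp [h0], rfl, ?_⟩
        intro i
        have := hadjs i.castSucc
        rwa [Fin.succ_castSucc] at this
      · rintro ⟨x, hadj, g, hgT, rfl⟩
        exact snoc_mem_WS G ((hTmem x g).1 hgT) ((SimpleGraph.adj_symm G hadj))
    have hfin : (WS G v (m+1) u).Finite := by rw [hset]; exact Fs.finite_toSet
    refine ⟨hfin, ?_⟩
    rw [hset, finsum_mem_coe_finset, hFs]
    have hinj : ∀ (x : V), ∀ g ∈ T x, ∀ g' ∈ T x,
        (Fin.snoc g u : Fin (m+2) → V) = Fin.snoc g' u → g = g' := by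
      intro x g _ g' _ h
      funext i
      have := congrFun h i.castSucc
      rwa [Fin.snoc_castSucc, Fin.snoc_castSucc] at this
    have hdisj : (↑(G.neighborFinset u) : Set V).PairwiseDisjoint
        (fun x => (T x).image (fun g => (Fin.snoc g u : Fin (m+2) → V))) := by
      intro x _ x' _ hxx'
      simp only [Function.onFun]
      rw [Finset.disjoint_left]
      rintro f hf hf'
      obtain ⟨g, hg, rfl⟩ := Finset.mem_image.1 hf
      obtain ⟨g', hg', heq⟩ := Finset.mem_image.1 hf'
      have hgg' : g' = g := by
        funext i
        have := congrFun heq i.castSucc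
        rwa [Fin.snoc_castSucc, Fin.snoc_castSucc] at this
      apply hxx'
      rw [← ((hTmem x g).1 hg).2.1, ← ((hTmem x' g').1 hg').2.1, hgg']
    rw [Finset.sum_biUnion hdisj]
    have hrhs : (((Aop G w)^(m+1)) (Finsupp.single v 1)) u
        = ∑ x ∈ G.neighborFinset u, (((Aop G w)^m) (Finsupp.single v 1)) x * w x u := by
      rw [pow_succ', Module.End.mul_apply, Aop_eval]
    rw [hrhs]
    apply Finset.sum_congr rfl
    intro x hx
    rw [Finset.sum_image (hinj x)]
    have : ∀ g ∈ T x, wtW w (m+1) (Fin.snoc g u) = wtW w m g * w x u := by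
      intro g hg
      rw [wt_snoc, ((hTmem x g).1 hg).2.1]
    have hTx : ∑ g ∈ T x, wtW w m g = ∑ᶠ g ∈ WS G v m x, wtW w m g := by
      rw [← finsum_mem_coe_finset, Set.Finite.coe_toFinset]
    rw [Finset.sum_congr rfl this, ← Finset.sum_mul, hTx, (IH x).2]


/-! ### Lanczos tridiagonalization -/

variable (v : V)

/-- Lanczos state: `(e (k-1), e k, B k)`. -/
def lanc : ℕ → ((V →₀ ℝ) × (V →₀ ℝ) × ℝ)
  | 0 => (0, Finsupp.single v 1, 0)
  | (k+1) =>
    let p := lanc k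
    let r := Aop G w p.2.1 - p.2.2 • p.1
    (p.2.1, (Real.sqrt (Bip r r))⁻¹ • r, Real.sqrt (Bip r r))

/-- the Lanczos orthonormal-ish vectors -/
def ec (k : ℕ) : V →₀ ℝ := (lanc G w v k).2.1

/-- the Lanczos off-diagonal coefficients -/
def Bc (k : ℕ) : ℝ := (lanc G w v k).2.2

/-- the Lanczos residual -/
def rvec (k : ℕ) : V →₀ ℝ := Aop G w (ec G w v k) - Bc G w v k • (lanc G w v k).1

lemma ec_zero : ec G w v 0 = Finsupp.single v 1 := rfl
lemma Bc_zero : Bc G w v 0 = 0 := rfl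
lemma lanc_fst_zero : (lanc G w v 0).1 = 0 := rfl
lemma lanc_fst_succ (k : ℕ) : (lanc G w v (k+1)).1 = ec G w v k := rfl
lemma Bc_succ (k : ℕ) : Bc G w v (k+1) = Real.sqrt (Bip (rvec G w v k) (rvec G w v k)) := rfl
lemma ec_succ (k : ℕ) : ec G w v (k+1) = (Bc G w v (k+1))⁻¹ • rvec G w v k := rfl

lemma Bip_zero_left (g : V →₀ ℝ) : Bip (0 : V →₀ ℝ) g = 0 := by
  rw [map_zero]; rfl

lemma key1 (k : ℕ) : Bc G w v (k+1) • ec G w v (k+1) = rvec G w v k := by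
  by_cases hr : rvec G w v k = 0
  · rw [ec_succ, hr, smul_zero, smul_zero]
  · have hq : 0 < Bip (rvec G w v k) (rvec G w v k) := Bip_pos _ hr
    have hs : Real.sqrt (Bip (rvec G w v k) (rvec G w v k)) ≠ 0 :=
      ne_of_gt (Real.sqrt_pos.2 hq)
    rw [ec_succ, smul_smul, Bc_succ, mul_inv_cancel₀ hs, one_smul]

lemma Aop_ec (k : ℕ) :
    Aop G w (ec G w v k) = Bc G w v (k+1) • ec G w v (k+1) + Bc G w v k • (lanc G w v k).1 := by
  rw [key1, rvec, sub_add_cancel]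

lemma ec_zero_ne : ec G w v 0 ≠ 0 := by
  rw [ec_zero]
  intro hc
  exact one_ne_zero (Finsupp.single_eq_zero.1 hc)

lemma norm_ec_zero : Bip (ec G w v 0) (ec G w v 0) = 1 := by
  rw [ec_zero, Bip_single_left, Finsupp.single_eq_same, mul_one]

lemma norm_ec {k : ℕ} (h : ec G w v k ≠ 0) : Bip (ec G w v k) (ec G w v k) = 1 := by
  cases k with
  | zero => exact norm_ec_zero G w v
  | succ k =>
    have hr : rvec G w v k ≠ 0 := by
      intro hc
      exact h (by rw [ec_succ, hc, smul_zero])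
    have hq : 0 < Bip (rvec G w v k) (rvec G w v k) := Bip_pos _ hr
    set q : ℝ := Bip (rvec G w v k) (rvec G w v k) with hqdef
    rw [ec_succ, Bc_succ]
    simp only [map_smul, LinearMap.smul_apply, smul_eq_mul, ← hqdef]
    have hrw : (Real.sqrt q)⁻¹ * ((Real.sqrt q)⁻¹ * q) = q / (Real.sqrt q)^2 := by ring
    rw [hrw, Real.sq_sqrt hq.le]
    exact div_self (ne_of_gt hq)

lemma chainB : ∀ k, ec G w v k = 0 → Bc G w v k = 0 := by
  intro k h
  cases k with
  | zero => rfl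
  | succ k =>
    have hr : rvec G w v k = 0 := by
      by_contra hr
      have hq : 0 < Bip (rvec G w v k) (rvec G w v k) := Bip_pos _ hr
      have hs : (Real.sqrt (Bip (rvec G w v k) (rvec G w v k)))⁻¹ ≠ 0 :=
        inv_ne_zero (ne_of_gt (Real.sqrt_pos.2 hq))
      have hne : ec G w v (k+1) ≠ 0 := by
        rw [ec_succ, Bc_succ]
        exact smul_ne_zero hs hr
      exact hne h
    rw [Bc_succ, hr, Bip_zero_left, Real.sqrt_zero]

lemma chainE (k : ℕ) (h : ec G w v k = 0) : ec G w v (k+1) = 0 := by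
  have hB : Bc G w v k = 0 := chainB G w v k h
  have hr : rvec G w v k = 0 := by
    rw [rvec, h, map_zero, hB, zero_smul, sub_zero]
  rw [ec_succ, hr, smul_zero]

lemma nzDown {k : ℕ} (h : ec G w v (k+1) ≠ 0) : ec G w v k ≠ 0 :=
  fun hc => h (chainE G w v k hc)

/-! ### parity -/

variable (col : V → Fin 2)

/-- the support has pure color `p` -/
def Par (p : Fin 2) (f : V →₀ ℝ) : Prop := ∀ x, f x ≠ 0 → col x = p

lemma fin2_ne {a b : Fin 2} (h : a ≠ b) : a = b + 1 := by
  fin_cases a <;> fin_cases b <;> simp_all <;> rfl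

lemma Par_Aop (hcol : ∀ {x y}, G.Adj x y → col x ≠ col y)
    {p : Fin 2} {f : V →₀ ℝ} (hf : Par col p f) : Par col (p+1) (Aop G w f) := by
  intro u hu
  rw [Aop_eval] at hu
  obtain ⟨x, hxn, hx⟩ := Finset.exists_ne_zero_of_sum_ne_zero hu
  have hfx : f x ≠ 0 := fun hc => hx (by rw [hc, zero_mul])
  have hadj : G.Adj u x := (SimpleGraph.mem_neighborFinset _ _ _).1 hxn
  have : col u ≠ col x := hcol hadj
  rw [hf x hfx] at this
  exact fin2_ne this

lemma Par_zero (p : Fin 2) : Par col p (0 : V →₀ ℝ) := by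
  intro x hx
  simp at hx

lemma Par_smul {p : Fin 2} {f : V →₀ ℝ} (c : ℝ) (hf : Par col p f) : Par col p (c • f) := by
  intro x hx
  apply hf
  intro hc
  rw [Finsupp.smul_apply, hc, smul_zero] at hx
  exact hx rfl

lemma Par_sub {p : Fin 2} {f g : V →₀ ℝ} (hf : Par col p f) (hg : Par col p g) :
    Par col p (f - g) := by
  intro x hx
  by_cases h1 : f x ≠ 0
  · exact hf x h1
  · apply hg x
    intro h2
    push_neg at h1
    rw [Finsupp.sub_apply, h1, h2, sub_zero] at hx
    exact hx rfl

lemma Par_orth {p : Fin 2} {f g : V →₀ ℝ} (hf : Par col p f) (hg : Par col (p+1) g) :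
    Bip f g = 0 := by
  rw [Bip_apply]
  apply Finset.sum_eq_zero
  intro x hx
  have hfx : f x ≠ 0 := Finsupp.mem_support_iff.1 hx
  have hgx : g x = 0 := by
    by_contra hgx
    have h1 := hf x hfx
    have h2 := hg x hgx
    rw [h1] at h2
    exact absurd h2 (by fin_cases p <;> simp <;> decide)
  rw [hgx, mul_zero]

open Fin.NatCast

lemma Par_ec (hcol : ∀ {x y}, G.Adj x y → col x ≠ col y) :
    ∀ k : ℕ, Par col ((col v) + k) (ec G w v k) ∧
    Par col ((col v) + k + 1) ((lanc G w v k).1) := by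
  intro k
  induction k with
  | zero =>
    constructor
    · intro x hx
      rw [ec_zero] at hx
      have : x = v := by
        by_contra hc
        rw [Finsupp.single_apply, if_neg (fun h => hc h.symm)] at hx
        exact hx rfl
      rw [this]
      simp
    · rw [lanc_fst_zero]
      exact Par_zero col _
  | succ k IH =>
    have hcast : ((col v) + ((k+1 : ℕ) : Fin 2) : Fin 2) = (col v) + ((k : ℕ) : Fin 2) + 1 := by
      push_cast
      rw [add_assoc]
    constructor
    · rw [show ((k+1 : ℕ) : Fin 2) = ((k:ℕ) : Fin 2) + 1 by push_cast; ring, ← add_assoc]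
      rw [ec_succ]
      apply Par_smul
      rw [rvec]
      apply Par_sub
      · exact Par_Aop G w col hcol IH.1
      · exact Par_smul col _ IH.2
    · rw [lanc_fst_succ, hcast]
      have h2 : ((col v) + ((k:ℕ) : Fin 2) + 1 + 1 : Fin 2) = (col v) + ((k:ℕ) : Fin 2) := by
        generalize ((col v) + ((k:ℕ):Fin 2) : Fin 2) = a
        fin_cases a <;> decide
      rw [h2]
      exact IH.1

lemma diag_ec (hcol : ∀ {x y}, G.Adj x y → col x ≠ col y) (k : ℕ) :
    Bip (Aop G w (ec G w v k)) (ec G w v k) = 0 := by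
  rw [Bip_comm]
  exact Par_orth col (Par_ec G w v col hcol k).1
    (Par_Aop G w col hcol (Par_ec G w v col hcol k).1)

lemma orth (hw : ∀ u u', w u u' = w u' u) (col : V → Fin 2)
    (hcol : ∀ {x y}, G.Adj x y → col x ≠ col y) :
    ∀ k, ∀ j, j < k → Bip (ec G w v k) (ec G w v j) = 0 := by
  intro k
  induction k using Nat.strong_induction_on with
  | _ k IHk =>
    match k with
    | 0 => exact fun j hj => absurd hj (Nat.not_lt_zero j)
    | (k+1) =>
      intro j hj
      have hj' : j ≤ k := Nat.lt_succ_iff.1 hj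
      by_cases hz : ec G w v (k+1) = 0
      · rw [hz, Bip_zero_left]
      · have hrne : rvec G w v k ≠ 0 := fun hc => hz (by rw [ec_succ, hc, smul_zero])
        have hkne : ec G w v k ≠ 0 := nzDown G w v hz
        rw [ec_succ, map_smul, LinearMap.smul_apply, smul_eq_mul]
        have hterm : ∀ j', j' < k → Bc G w v j' * Bip (ec G w v k) ((lanc G w v j').1) = 0 := by
          intro j' hj'lt
          match j' with
          | 0 => rw [Bc_zero, zero_mul]
          | (j''+1) =>
            rw [lanc_fst_succ, IHk k (Nat.lt_succ_self k) j'' (by omega), mul_zero]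
        have hmain : Bip (rvec G w v k) (ec G w v j) = 0 := by
          rw [rvec, map_sub, LinearMap.sub_apply, map_smul, LinearMap.smul_apply, smul_eq_mul]
          rcases Nat.lt_trichotomy (j+1) k with hlt | heq | hgt
          · -- j + 1 < k
            have h1 : Bip (Aop G w (ec G w v k)) (ec G w v j) = 0 := by
              rw [Aop_symm G w hw, Aop_ec, map_add, map_smul, map_smul, smul_eq_mul, smul_eq_mul]
              rw [IHk k (Nat.lt_succ_self k) (j+1) hlt, mul_zero, zero_add]
              exact hterm j (by omega)
            rw [h1, zero_sub, neg_eq_zero]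
            match k, hlt with
            | (k''+1), hlt =>
              rw [lanc_fst_succ, IHk k'' (by omega) j (by omega), mul_zero]
          · -- j + 1 = k
            have hjne : ec G w v j ≠ 0 := by
              have := nzDown G w v (k := j) (by rw [heq]; exact hkne)
              exact this
            have h1 : Bip (Aop G w (ec G w v k)) (ec G w v j)
                = Bc G w v k + Bc G w v j * Bip (ec G w v k) ((lanc G w v j).1) := by
              rw [Aop_symm G w hw, Aop_ec, map_add, map_smul, map_smul, smul_eq_mul, smul_eq_mul]
              rw [heq, norm_ec G w v hkne, mul_one]
            rw [h1, hterm j (by omega), add_zero]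
            rw [← heq, lanc_fst_succ, norm_ec G w v hjne, mul_one, heq, sub_self]
          · -- j = k
            have hjk : j = k := by omega
            subst hjk
            have h1 : Bip (Aop G w (ec G w v j)) (ec G w v j) = 0 := diag_ec G w v col hcol j
            rw [h1, zero_sub, neg_eq_zero]
            match j, hj with
            | 0, _ => rw [Bc_zero, zero_mul]
            | (j''+1), _ =>
              rw [lanc_fst_succ, Bip_comm,
                IHk (j''+1) (Nat.lt_succ_self _) j'' (Nat.lt_succ_self _), mul_zero]
        rw [hmain, mul_zero]


end Generic

/-! ### the path graph on ℕ -/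

def pathG : SimpleGraph ℕ where
  Adj a b := b = a + 1 ∨ a = b + 1
  symm := by constructor; intro a b h; tauto
  loopless := by constructor; intro a h; omega

lemma pathG_adj (a b : ℕ) : pathG.Adj a b ↔ (b = a + 1 ∨ a = b + 1) := Iff.rfl

noncomputable instance pathG_lf : ∀ k, Fintype (pathG.neighborSet k) := fun k =>
  Set.Finite.fintype (Set.Finite.subset
    ((Set.finite_singleton (k-1)).insert (k+1)) (by
      intro j hj
      rw [SimpleGraph.mem_neighborSet, pathG_adj] at hj
      rw [Set.mem_insert_iff, Set.mem_singleton_iff]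
      omega))

lemma pathN0 : pathG.neighborFinset 0 = {1} := by
  ext j
  rw [SimpleGraph.mem_neighborFinset, pathG_adj, Finset.mem_singleton]
  omega

lemma pathNS (k : ℕ) : pathG.neighborFinset (k+1) = {k, k+2} := by
  ext j
  rw [SimpleGraph.mem_neighborFinset, pathG_adj, Finset.mem_insert, Finset.mem_singleton]
  omega

/-! ### transfer -/

section Transfer

variable {V : Type} (G : SimpleGraph V) [inst : ∀ x, Fintype (G.neighborSet x)]
  (w : V → V → ℝ) (v : V)

lemma AT_TJ :
    (Aop G w) ∘ₗ (Finsupp.linearCombination ℝ (ec G w v))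
      = (Finsupp.linearCombination ℝ (ec G w v)) ∘ₗ
        (Aop pathG (fun a b => Bc G w v (max a b))) := by
  apply Finsupp.lhom_ext
  intro k c
  simp only [LinearMap.comp_apply]
  rw [Finsupp.linearCombination_single, map_smul, Aop_single, map_smul]
  congr 1
  cases k with
  | zero =>
    rw [rowW, pathN0, Finset.sum_singleton, Finsupp.linearCombination_single]
    rw [Aop_ec G w v 0, lanc_fst_zero, smul_zero, add_zero]
    norm_num
  | succ k =>
    rw [rowW, pathNS, Finset.sum_pair (by omega : k ≠ k+2)]
    rw [map_add, Finsupp.linearCombination_single, Finsupp.linearCombination_single]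
    rw [Aop_ec G w v (k+1), lanc_fst_succ]
    have h1 : max (k+1) k = k+1 := by omega
    have h2 : max (k+1) (k+2) = k+2 := by omega
    simp only [h1, h2]
    rw [add_comm]

lemma powT (m : ℕ) :
    ((Aop G w)^m) (Finsupp.single v 1) =
      Finsupp.linearCombination ℝ (ec G w v)
        (((Aop pathG (fun a b => Bc G w v (max a b)))^m) (Finsupp.single 0 1)) := by
  induction m with
  | zero =>
    rw [pow_zero, pow_zero, Module.End.one_apply, Module.End.one_apply,
      Finsupp.linearCombination_single, one_smul, ec_zero]
  | succ m IH =>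
    rw [pow_succ', Module.End.mul_apply, IH, pow_succ', Module.End.mul_apply,
      ← LinearMap.comp_apply, AT_TJ, LinearMap.comp_apply]

lemma T_apply_v (hw : ∀ u u', w u u' = w u' u) (col : V → Fin 2)
    (hcol : ∀ {x y}, G.Adj x y → col x ≠ col y) (h : ℕ →₀ ℝ) :
    (Finsupp.linearCombination ℝ (ec G w v) h) v = h 0 := by
  have h1 : (Finsupp.linearCombination ℝ (ec G w v) h) v
      = Bip (Finsupp.linearCombination ℝ (ec G w v) h) (ec G w v 0) := by
    rw [ec_zero, Bip_single_right, mul_one]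
  rw [h1, Finsupp.linearCombination_apply]
  have h2 : Bip (h.sum fun k c => c • ec G w v k) (ec G w v 0)
      = h.sum fun k c => c * Bip (ec G w v k) (ec G w v 0) := by
    rw [show Bip (h.sum fun k c => c • ec G w v k) (ec G w v 0)
      = (Bip.flip (ec G w v 0)) (h.sum fun k c => c • ec G w v k) from rfl]
    rw [map_finsuppSum]
    apply Finsupp.sum_congr
    intro k _
    rw [LinearMap.flip_apply, map_smul, LinearMap.smul_apply, smul_eq_mul]
  rw [h2, Finsupp.sum]
  have h3 : ∀ k ∈ h.support, h k * Bip (ec G w v k) (ec G w v 0)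
      = if k = 0 then h k else 0 := by
    intro k _
    cases k with
    | zero => rw [norm_ec_zero, mul_one, if_pos rfl]
    | succ k' =>
      rw [orth G w v hw col hcol (k'+1) 0 (Nat.succ_pos _), mul_zero, if_neg (Nat.succ_ne_zero _)]
  rw [Finset.sum_congr rfl h3, Finset.sum_ite_eq' h.support 0 (fun k => h k)]
  by_cases h0 : (0:ℕ) ∈ h.support
  · rw [if_pos h0]
  · rw [if_neg h0, Finsupp.notMem_support_iff.1 h0]

end Transfer

/-- Let `G` be a locally finite bipartite simple graph, `v` a vertex, and `w` a
symmetric real edge-weight function. If `a n` is the weighted sum over all closed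
walks of length `2n` at `v`, then `a` is path-enumerable. -/
theorem stmt5 {V : Type} (G : SimpleGraph V) (hfin : G.LocallyFinite)
    (hbip : G.Colorable 2) (v : V) (w : V → V → ℝ)
    (hw : ∀ u u' : V, w u u' = w u' u) (a : ℕ → ℝ)
    (ha : ∀ n : ℕ, a n =
      ∑ᶠ f ∈ {f : Fin (2 * n + 1) → V | f 0 = v ∧ f (Fin.last (2 * n)) = v ∧
          ∀ i : Fin (2 * n), G.Adj (f i.castSucc) (f i.succ)},
        ∏ i : Fin (2 * n), w (f i.castSucc) (f i.succ)) :
    IsPathEnum a := by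
  classical
  haveI hI : ∀ x, Fintype (G.neighborSet x) := hfin
  obtain ⟨C⟩ := hbip
  have hcol : ∀ {x y}, G.Adj x y → (⇑C) x ≠ (⇑C) y := fun h => C.valid h
  have key : ∀ n : ℕ, a n = (((Aop G w)^(2*n)) (Finsupp.single v 1)) v := by
    intro n
    rw [ha n]
    exact (walk_sum G w v (2*n) v).2
  have key2 : ∀ n : ℕ,
      (((Aop pathG (fun a b => Bc G w v (max a b)))^(2*n)) (Finsupp.single 0 1)) 0
        = ∑ᶠ f ∈ closedWalks0 n, walkWeight (Bc G w v) n f := by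
    intro n
    exact ((walk_sum pathG (fun a b => Bc G w v (max a b)) 0 (2*n) 0).2).symm
  have ha0 : a 0 = 1 := by
    rw [key 0, show 2*0 = 0 from rfl, pow_zero, Module.End.one_apply, Finsupp.single_eq_same]
  refine ⟨by rw [ha0]; norm_num, Bc G w v, ?_⟩
  intro n
  rw [ha0, one_mul, key n, powT G w v (2*n), T_apply_v G w v hw (⇑C) hcol, key2 n]
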